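/- Fix ζ on the unit circle and for k ≥ 1 let f_k(z) = ((1 + conj(ζ)z)/2)^k. Then for β real there exists a constant c > 0 such that ‖f_k‖²_{H²_β} ≥ c(k+1)^{2β−1} for all k ≥ 1. -/

import Mathlib

/-- The `j`-th Taylor coefficient of the peak function power
`f_k(z) = ((1 + conj(ζ) z)/2)^k`, namely `C(k,j) conj(ζ)^j / 2^k`. -/
noncomputable def peakCoeff (ζ : ℂ) (k j : ℕ) : ℂ :=
  (k.choose j : ℂ) * ((starRingEnd ℂ) ζ) ^ j / 2 ^ k

/-- The `H²_β` norm squared of `f_k`, computed from its Taylor coefficients: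
`‖f‖²_β = |a_0|² + ∑_{j≥1} j^{2β} |a_j|²`. -/
noncomputable def peakNormSq (β : ℝ) (ζ : ℂ) (k : ℕ) : ℝ :=
  ‖peakCoeff ζ k 0‖ ^ 2 +
    ∑' j : ℕ, (if j = 0 then 0 else (j : ℝ) ^ (2 * β)) * ‖peakCoeff ζ k j‖ ^ 2

open Finset


private lemma sum_choose_sq (k : ℕ) :
    ∑ j ∈ range (k + 1), (k.choose j) ^ 2 = (2 * k).choose k := by
  rw [two_mul, Nat.add_choose_eq, Finset.Nat.sum_antidiagonal_eq_sum_range_succ_mk]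
  refine Finset.sum_congr rfl fun j hj => ?_
  simp only [Finset.mem_range] at hj
  rw [Nat.choose_symm (by omega : j ≤ k)]; ring

private lemma half_sum (k : ℕ) :
    (2 * k).choose k ≤ 2 * ∑ j ∈ Icc ((k + 1) / 2) k, (k.choose j) ^ 2 := by
  set c := (k + 1) / 2 with hc
  have hck : c ≤ k + 1 := by omega
  have hsplit : range (k + 1) = Ico 0 c ∪ Icc c k := by
    ext j
    simp only [Finset.mem_range, Finset.mem_union, Finset.mem_Ico, Finset.mem_Icc]
    omega
  have hdisj : Disjoint (Ico 0 c) (Icc c k) := by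
    simp only [Finset.disjoint_left, Finset.mem_Ico, Finset.mem_Icc]
    intro a ha; omega
  have h1 : ∑ j ∈ Ico 0 c, (k.choose j) ^ 2 ≤ ∑ j ∈ Icc c k, (k.choose j) ^ 2 := by
    have himg : ∑ j ∈ (Ico 0 c).image (fun j => k - j), (k.choose j) ^ 2
        = ∑ j ∈ Ico 0 c, (k.choose j) ^ 2 := by
      rw [Finset.sum_image (by intro a ha b hb hab; beta_reduce at hab; simp [Finset.mem_Ico] at ha hb; omega)]
      refine Finset.sum_congr rfl fun j hj => ?_
      simp only [Finset.mem_Ico] at hj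
      rw [Nat.choose_symm (by omega : j ≤ k)]
    rw [← himg]
    refine Finset.sum_le_sum_of_subset ?_
    intro x hx
    simp only [Finset.mem_image, Finset.mem_Ico, Finset.mem_Icc] at hx ⊢
    obtain ⟨j, hj, rfl⟩ := hx
    omega
  calc (2 * k).choose k = ∑ j ∈ range (k + 1), (k.choose j) ^ 2 := (sum_choose_sq k).symm
    _ = ∑ j ∈ Ico 0 c, (k.choose j) ^ 2 + ∑ j ∈ Icc c k, (k.choose j) ^ 2 := by
        rw [hsplit, Finset.sum_union hdisj]
    _ ≤ 2 * ∑ j ∈ Icc c k, (k.choose j) ^ 2 := by omega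

/-- For `ζ` on the unit circle and `f_k(z) = ((1+conj(ζ)z)/2)^k`,
there is a constant `c > 0` with `‖f_k‖²_{H²_β} ≥ c (k+1)^{2β-1}` for all `k ≥ 1`. -/
theorem peak_function_norm_lower_bound (β : ℝ) (ζ : ℂ) (hζ : ‖ζ‖ = 1) :
    ∃ c : ℝ, 0 < c ∧ ∀ k : ℕ, 1 ≤ k →
      c * ((k : ℝ) + 1) ^ (2 * β - 1) ≤ peakNormSq β ζ k := by
  set m : ℝ := min ((4 : ℝ) ^ (-(2 * β))) 1 with hm
  have hmpos : 0 < m := lt_min (Real.rpow_pos_of_pos (by norm_num) _) one_pos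
  refine ⟨m / 4, by positivity, fun k hk => ?_⟩
  set c := (k + 1) / 2 with hcdef
  -- coefficient norms
  have hcoeff : ∀ j, ‖peakCoeff ζ k j‖ ^ 2 = (k.choose j : ℝ) ^ 2 / 4 ^ k := by
    intro j
    have h2 : ‖(2 : ℂ) ^ k‖ = (2 : ℝ) ^ k := by
      rw [norm_pow]; norm_num
    have : ‖peakCoeff ζ k j‖ = (k.choose j : ℝ) / 2 ^ k := by
      simp [peakCoeff, norm_div, norm_mul, norm_pow, RCLike.norm_conj, hζ, h2]
    rw [this, div_pow]
    congr 1
    rw [← pow_mul, mul_comm, pow_mul]; norm_num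
  -- summand
  set g : ℕ → ℝ := fun j => (if j = 0 then 0 else (j : ℝ) ^ (2 * β)) * ‖peakCoeff ζ k j‖ ^ 2
    with hg
  have hgnonneg : ∀ j, 0 ≤ g j := by
    intro j; simp only [hg]
    rcases eq_or_ne j 0 with h | h
    · simp [h]
    · rw [if_neg h]; positivity
  have hgzero : ∀ j ∉ range (k + 1), g j = 0 := by
    intro j hj
    simp only [Finset.mem_range, not_lt] at hj
    have hc0 : k.choose j = 0 := Nat.choose_eq_zero_of_lt (by omega)
    simp only [hg, hcoeff j, hc0]
    simp
  have htsum : ∑' j, g j = ∑ j ∈ range (k + 1), g j := tsum_eq_sum hgzero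
  -- lower bound the sum by sum over Icc c k
  have hsub : Icc c k ⊆ range (k + 1) := by
    intro x hx; simp only [Finset.mem_Icc] at hx; simp only [Finset.mem_range]; omega
  have hstep1 : ∑ j ∈ Icc c k, g j ≤ ∑ j ∈ range (k + 1), g j :=
    Finset.sum_le_sum_of_subset_of_nonneg hsub (fun j _ _ => hgnonneg j)
  -- pointwise bound on Icc c k
  have hkey : ∀ j ∈ Icc c k, m * ((k : ℝ) + 1) ^ (2 * β) * ((k.choose j : ℝ) ^ 2 / 4 ^ k) ≤ g j := by
    intro j hj
    simp only [Finset.mem_Icc] at hj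
    have hj0 : j ≠ 0 := by omega
    have hjlb : ((k : ℝ) + 1) / 4 ≤ (j : ℝ) := by
      have h' : k + 1 ≤ 4 * j := by omega
      have h'' : ((k : ℝ)) + 1 ≤ 4 * (j : ℝ) := by exact_mod_cast h'
      linarith
    have hjub : (j : ℝ) ≤ (k : ℝ) + 1 := by
      have : j ≤ k + 1 := by omega
      exact_mod_cast this
    have hrpow : m * ((k : ℝ) + 1) ^ (2 * β) ≤ (j : ℝ) ^ (2 * β) := by
      rcases le_or_gt 0 (2 * β) with hb | hb
      · calc m * ((k : ℝ) + 1) ^ (2 * β)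
            ≤ (4 : ℝ) ^ (-(2 * β)) * ((k : ℝ) + 1) ^ (2 * β) := by
              apply mul_le_mul_of_nonneg_right (min_le_left _ _)
              positivity
          _ = (((k : ℝ) + 1) / 4) ^ (2 * β) := by
              rw [Real.div_rpow (by positivity) (by norm_num), Real.rpow_neg (by norm_num)]
              ring
          _ ≤ (j : ℝ) ^ (2 * β) := Real.rpow_le_rpow (by positivity) hjlb hb
      · calc m * ((k : ℝ) + 1) ^ (2 * β)
            ≤ 1 * ((k : ℝ) + 1) ^ (2 * β) := by
              apply mul_le_mul_of_nonneg_right (min_le_right _ _)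
              positivity
          _ = ((k : ℝ) + 1) ^ (2 * β) := one_mul _
          _ ≤ (j : ℝ) ^ (2 * β) := by
              apply Real.rpow_le_rpow_of_nonpos (by positivity) hjub hb.le
    simp only [hg, if_neg hj0, hcoeff j]
    apply mul_le_mul_of_nonneg_right hrpow
    positivity
  have hstep2 : m * ((k : ℝ) + 1) ^ (2 * β) / 4 ^ k * ∑ j ∈ Icc c k, ((k.choose j : ℝ)) ^ 2
      ≤ ∑ j ∈ Icc c k, g j := by
    rw [Finset.mul_sum]
    refine Finset.sum_le_sum fun j hj => ?_
    have := hkey j hj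
    calc m * ((k : ℝ) + 1) ^ (2 * β) / 4 ^ k * (k.choose j : ℝ) ^ 2
        = m * ((k : ℝ) + 1) ^ (2 * β) * ((k.choose j : ℝ) ^ 2 / 4 ^ k) := by ring
      _ ≤ g j := this
  -- binomial sum lower bound
  have hbin : (4 : ℝ) ^ k / (4 * ((k : ℝ) + 1)) ≤ ∑ j ∈ Icc c k, ((k.choose j : ℝ)) ^ 2 := by
    have h1 : (4 : ℕ) ^ k ≤ (2 * k + 1) * (2 * k).choose k :=
      Nat.four_pow_le_two_mul_add_one_mul_central_binom k
    have h2 := half_sum k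
    have h3 : (4 : ℕ) ^ k ≤ (2 * k + 1) * (2 * (∑ j ∈ Icc c k, (k.choose j) ^ 2)) :=
      le_trans h1 (Nat.mul_le_mul_left _ h2)
    have h4 : (4 : ℝ) ^ k ≤ (2 * (k : ℝ) + 1) * (2 * ∑ j ∈ Icc c k, ((k.choose j : ℝ)) ^ 2) := by
      exact_mod_cast h3
    have h5 : (2 * (k : ℝ) + 1) * 2 ≤ 4 * ((k : ℝ) + 1) := by linarith
    have hS : (0 : ℝ) ≤ ∑ j ∈ Icc c k, ((k.choose j : ℝ)) ^ 2 := by positivity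
    rw [div_le_iff₀ (by positivity)]
    nlinarith [mul_le_mul_of_nonneg_right h5 hS]
  -- combine
  have hfinal : m / 4 * ((k : ℝ) + 1) ^ (2 * β - 1) ≤ ∑ j ∈ Icc c k, g j := by
    refine le_trans ?_ hstep2
    have hA : m * ((k : ℝ) + 1) ^ (2 * β) / 4 ^ k * ((4 : ℝ) ^ k / (4 * ((k : ℝ) + 1)))
        ≤ m * ((k : ℝ) + 1) ^ (2 * β) / 4 ^ k * ∑ j ∈ Icc c k, ((k.choose j : ℝ)) ^ 2 := by
      apply mul_le_mul_of_nonneg_left hbin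
      positivity
    refine le_trans (le_of_eq ?_) hA
    have hk1 : (0 : ℝ) < (k : ℝ) + 1 := by positivity
    rw [Real.rpow_sub hk1, Real.rpow_one]
    have h4k : (4 : ℝ) ^ k ≠ 0 := by positivity
    field_simp
    try ring
  calc m / 4 * ((k : ℝ) + 1) ^ (2 * β - 1) ≤ ∑ j ∈ Icc c k, g j := hfinal
    _ ≤ ∑ j ∈ range (k + 1), g j := hstep1
    _ = ∑' j, g j := htsum.symm
    _ ≤ ‖peakCoeff ζ k 0‖ ^ 2 + ∑' j, g j :=
        le_add_of_nonneg_left (by positivity)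
    _ = peakNormSq β ζ k := by
        simp only [peakNormSq, hg]
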